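/- Let X be a bounded geometry metric space with property A. Then X has ULA_μ. -/

import Mathlib

/-- `N_R(E)`, the `R`-neighbourhood of `E`. -/
def nbhd {X : Type*} [MetricSpace X] (R : ℝ) (E : Set X) : Set X :=
  {y | ∃ e ∈ E, dist y e ≤ R}

/-- `∂_R E = N_R(E) \ E`. -/
def bdry {X : Type*} [MetricSpace X] (R : ℝ) (E : Set X) : Set X :=
  nbhd R E \ E

/-- Bounded geometry. -/
def BoundedGeometry (X : Type*) [MetricSpace X] : Prop :=
  ∀ R : ℝ, 0 < R → ∃ N : ℕ, ∀ x : X,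
    {y | dist x y ≤ R}.Finite ∧ {y | dist x y ≤ R}.ncard ≤ N

/-- A probability measure on `X`, as a function. -/
def IsProbFn {X : Type*} (μ : X → ℝ) : Prop :=
  (∀ x, 0 ≤ μ x) ∧ Summable μ ∧ ∑' x, μ x = 1

/-- `μ(E)`. -/
noncomputable def measOf {X : Type*} (μ : X → ℝ) (E : Set X) : ℝ := ∑' x : E, μ x

/-- Uniform local amenability. -/
def ULA (X : Type*) [MetricSpace X] : Prop :=
  ∀ R : ℝ, 0 < R → ∀ ε : ℝ, 0 < ε → ∃ S : ℝ, 0 < S ∧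
    ∀ F : Set X, F.Finite → ∃ E : Set X, E.Finite ∧
      EMetric.diam E ≤ ENNReal.ofReal S ∧
      ((bdry R E ∩ F).ncard : ℝ) < ε * ((E ∩ F).ncard : ℝ)

/-- Measured uniform local amenability. -/
def ULAmu (X : Type*) [MetricSpace X] : Prop :=
  ∀ R : ℝ, 0 < R → ∀ ε : ℝ, 0 < ε → ∃ S : ℝ, 0 < S ∧
    ∀ μ : X → ℝ, IsProbFn μ → ∃ E : Set X, E.Finite ∧
      EMetric.diam E ≤ ENNReal.ofReal S ∧
      measOf μ (bdry R E) < ε * measOf μ E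

/-- Coarse embedding. -/
def CoarseEmbedding {X Y : Type*} [MetricSpace X] [MetricSpace Y] (f : X → Y) : Prop :=
  ∃ ρm ρp : ℝ → ℝ, Monotone ρm ∧ Monotone ρp ∧
    Filter.Tendsto ρm Filter.atTop Filter.atTop ∧
    ∀ x₁ x₂ : X, ρm (dist x₁ x₂) ≤ dist (f x₁) (f x₂) ∧
      dist (f x₁) (f x₂) ≤ ρp (dist x₁ x₂)

/-- Property A (Higson–Roe formulation). -/
def PropertyA (X : Type*) [MetricSpace X] : Prop :=
  ∀ R : ℝ, 0 < R → ∀ ε : ℝ, 0 < ε → ∃ S : ℝ, 0 < S ∧ ∃ ξ : X → X → ℝ,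
    (∀ x, IsProbFn (ξ x)) ∧
    (∀ x y, dist x y ≤ R → (∑' z, |ξ x z - ξ y z|) < ε) ∧
    (∀ x z, ξ x z ≠ 0 → dist x z ≤ S)

/-- measOf over a set contained in a finset equals a finite indicator sum. -/
lemma measOf_eq_sum_indicator {X : Type*} (μ : X → ℝ) (E : Set X) (F : Finset X)
    (hE : E ⊆ ↑F) : measOf μ E = ∑ x ∈ F, E.indicator μ x := by
  rw [measOf, tsum_subtype]
  exact tsum_eq_sum (fun b hb => Set.indicator_of_notMem (fun h => hb (hE h)) μ)

open MeasureTheory ENNReal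

/-- Proposition 3.2: property A implies $ULA_\mu$ for bounded geometry metric spaces. -/
theorem propertyA_implies_ulamu {X : Type*} [MetricSpace X]
    (hbg : BoundedGeometry X) (hA : PropertyA X) : ULAmu X := by
  intro R hR ε hε
  obtain ⟨N, hN⟩ := hbg R hR
  set ε' : ℝ := ε / (2 * (N + 1)) with hε'def
  have hNpos : (0:ℝ) < 2 * (N + 1) := by positivity
  have hε' : 0 < ε' := div_pos hε hNpos
  obtain ⟨S, hS, ξ, hprob, hvar, hsupp⟩ := hA R hR ε' hε'
  obtain ⟨N₂, hN₂⟩ := hbg (S + R) (by linarith)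
  refine ⟨2 * S, by linarith, ?_⟩
  intro μ hμ
  by_contra hcon
  push_neg at hcon
  -- hcon : ∀ E, E.Finite → diam E ≤ ENNReal.ofReal (2S) → ε * measOf μ E ≤ measOf μ (bdry R E)
  obtain ⟨hμ0, hμsum, hμ1⟩ := hμ
  -- the R-ball finsets
  set Bx : X → Finset X := fun x => (hN x).1.toFinset with hBx
  have hBx_mem : ∀ x y, y ∈ Bx x ↔ dist x y ≤ R := by
    intro x y; simp [hBx, Set.Finite.mem_toFinset]
  have hBx_self : ∀ x, x ∈ Bx x := fun x => (hBx_mem x x).2 (by simp [hR.le])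
  have hBx_card : ∀ x, (Bx x).card ≤ N := by
    intro x
    have h2 := (hN x).2
    rwa [Set.ncard_eq_toFinset_card _ (hN x).1] at h2
  -- the (S+R)-ball finsets around z
  set Fz : X → Finset X := fun z => (hN₂ z).1.toFinset with hFz
  have hFz_mem : ∀ z y, y ∈ Fz z ↔ dist z y ≤ S + R := by
    intro z y; simp [hFz, Set.Finite.mem_toFinset]
  -- basic facts about ξ
  have hξ0 : ∀ x z, 0 ≤ ξ x z := fun x z => (hprob x).1 z
  have hξ1 : ∀ x z, ξ x z ≤ 1 := by
    intro x z
    have := Summable.le_tsum (hprob x).2.1 z (fun j _ => hξ0 x j)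
    rwa [(hprob x).2.2] at this
  -- the "r" quantity
  set r : X → X → ℝ := fun x z => ∑ e ∈ Bx x, |ξ e z - ξ x z| with hrdef
  have hr0 : ∀ x z, 0 ≤ r x z := fun x z => Finset.sum_nonneg (fun e _ => abs_nonneg _)
  -- the sup function
  have key : ∀ z : X,
      ENNReal.ofReal ε * ∑' x, ENNReal.ofReal (μ x) * ENNReal.ofReal (ξ x z)
        ≤ ∑' x, ENNReal.ofReal (μ x) * ENNReal.ofReal (r x z) := by
    intro z
    set g : X → ℝ := fun x => ξ x z with hgdef
    set hh : X → ℝ := fun x => (Bx x).sup' ⟨x, hBx_self x⟩ g with hhdef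
    have hgh : ∀ x, g x ≤ hh x := fun x => Finset.le_sup' g (hBx_self x)
    have hh1 : ∀ x, hh x ≤ 1 := by
      intro x
      exact Finset.sup'_le _ _ (fun e _ => hξ1 e z)
    have hhr : ∀ x, hh x - g x ≤ r x z := by
      intro x
      obtain ⟨e₀, he₀, heq⟩ := Finset.exists_mem_eq_sup' ⟨x, hBx_self x⟩ g
      rw [hhdef]
      calc (Bx x).sup' ⟨x, hBx_self x⟩ g - g x = g e₀ - g x := by rw [heq]
        _ ≤ |ξ e₀ z - ξ x z| := le_abs_self _
        _ ≤ r x z := Finset.single_le_sum (f := fun e => |ξ e z - ξ x z|)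
            (fun e _ => abs_nonneg _) he₀
    have hsupp' : ∀ x, x ∉ Fz z → g x = 0 := by
      intro x hx
      by_contra h0
      have := hsupp x z h0
      exact hx ((hFz_mem z x).2 (by rw [dist_comm]; linarith))
    -- pointwise-in-t inequality
    have hst : ∀ t ∈ Set.Ioc (0:ℝ) 1,
        ENNReal.ofReal ε * ∑ x ∈ Fz z, (Set.Ioo 0 (g x)).indicator (fun _ => ENNReal.ofReal (μ x)) t
          ≤ ∑ x ∈ Fz z, (Set.Ico (g x) (hh x)).indicator (fun _ => ENNReal.ofReal (μ x)) t := by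
      intro t ht
      set Et : Set X := {x | t < g x} with hEtdef
      have hEtS : ∀ x ∈ Et, dist x z ≤ S := by
        intro x hx
        refine hsupp x z ?_
        have : (0:ℝ) < g x := lt_trans ht.1 hx
        exact ne_of_gt this
      have hEtFz : Et ⊆ ↑(Fz z) := by
        intro x hx
        exact (hFz_mem z x).2 (by rw [dist_comm]; linarith [hEtS x hx])
      have hEtfin : Et.Finite := (hN₂ z).1.subset (by
        intro x hx
        show dist z x ≤ S + R
        rw [dist_comm]
        exact le_trans (hEtS x hx) (by linarith))
      have hdiam : EMetric.diam Et ≤ ENNReal.ofReal (2 * S) := by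
        apply EMetric.diam_le
        intro a ha b hb
        rw [edist_dist]
        apply ofReal_le_ofReal
        calc dist a b ≤ dist a z + dist z b := dist_triangle a z b
          _ ≤ S + S := add_le_add (hEtS a ha) (by rw [dist_comm]; exact hEtS b hb)
          _ = 2 * S := by ring
      have hmain := hcon Et hEtfin hdiam
      -- boundary is inside Fz and satisfies g ≤ t < hh
      have hbd : ∀ x ∈ bdry R Et, x ∈ Fz z ∧ g x ≤ t ∧ t < hh x := by
        intro x hx
        obtain ⟨⟨e, he, hde⟩, hnot⟩ := hx
        have heS : dist e z ≤ S := hEtS e he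
        have hxFz : x ∈ Fz z := by
          refine (hFz_mem z x).2 ?_
          calc dist z x ≤ dist z e + dist e x := dist_triangle z e x
            _ ≤ S + R := add_le_add (by rw [dist_comm z e]; exact heS) (by rw [dist_comm e x]; exact hde)
        have hgx : g x ≤ t := le_of_not_gt (fun h => hnot h)
        have hhx : t < hh x := by
          have heBx : e ∈ Bx x := (hBx_mem x e).2 hde
          exact lt_of_lt_of_le he (Finset.le_sup' g heBx)
        exact ⟨hxFz, hgx, hhx⟩
      have hbdFz : bdry R Et ⊆ ↑(Fz z) := fun x hx => (hbd x hx).1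
      -- rewrite measOf as finite sums
      rw [measOf_eq_sum_indicator μ Et (Fz z) hEtFz,
          measOf_eq_sum_indicator μ (bdry R Et) (Fz z) hbdFz] at hmain
      have hLHS : ∑ x ∈ Fz z, (Set.Ioo 0 (g x)).indicator (fun _ => ENNReal.ofReal (μ x)) t
          = ENNReal.ofReal (∑ x ∈ Fz z, Et.indicator μ x) := by
        rw [ofReal_sum_of_nonneg (fun x _ => Set.indicator_nonneg (fun y _ => hμ0 y) x)]
        apply Finset.sum_congr rfl
        intro x _
        by_cases hx : x ∈ Et
        · rw [Set.indicator_of_mem hx, Set.indicator_of_mem (Set.mem_Ioo.mpr ⟨ht.1, hx⟩)]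
        · rw [Set.indicator_of_notMem hx, Set.indicator_of_notMem (fun h => hx h.2),
            ofReal_zero]
      have hRHS : ENNReal.ofReal (∑ x ∈ Fz z, (bdry R Et).indicator μ x)
          ≤ ∑ x ∈ Fz z, (Set.Ico (g x) (hh x)).indicator (fun _ => ENNReal.ofReal (μ x)) t := by
        rw [ofReal_sum_of_nonneg (fun x _ => Set.indicator_nonneg (fun y _ => hμ0 y) x)]
        apply Finset.sum_le_sum
        intro x _
        by_cases hx : x ∈ bdry R Et
        · obtain ⟨_, hg, hhx⟩ := hbd x hx
          rw [Set.indicator_of_mem hx, Set.indicator_of_mem (Set.mem_Ico.mpr ⟨hg, hhx⟩)]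
        · rw [Set.indicator_of_notMem hx, ofReal_zero]
          exact zero_le
      calc ENNReal.ofReal ε * ∑ x ∈ Fz z, (Set.Ioo 0 (g x)).indicator (fun _ => ENNReal.ofReal (μ x)) t
          = ENNReal.ofReal (ε * ∑ x ∈ Fz z, Et.indicator μ x) := by
            rw [hLHS, ← ofReal_mul hε.le]
        _ ≤ ENNReal.ofReal (∑ x ∈ Fz z, (bdry R Et).indicator μ x) := ofReal_le_ofReal hmain
        _ ≤ _ := hRHS
    -- integrate over t ∈ (0,1]
    have hmeas1 : ∀ x : X, Measurable ((Set.Ioo (0:ℝ) (g x)).indicator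
        (fun _ => ENNReal.ofReal (μ x))) := fun x => measurable_const.indicator measurableSet_Ioo
    have hmeas2 : ∀ x : X, Measurable ((Set.Ico (g x) (hh x)).indicator
        (fun _ => ENNReal.ofReal (μ x))) := fun x => measurable_const.indicator measurableSet_Ico
    have int1 : ∫⁻ t in Set.Ioc (0:ℝ) 1,
        (∑ x ∈ Fz z, (Set.Ioo 0 (g x)).indicator (fun _ => ENNReal.ofReal (μ x)) t)
        = ∑ x ∈ Fz z, ENNReal.ofReal (μ x) * ENNReal.ofReal (g x) := by
      rw [lintegral_finset_sum _ (fun x _ => hmeas1 x)]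
      apply Finset.sum_congr rfl
      intro x _
      rw [lintegral_indicator measurableSet_Ioo, setLIntegral_const,
        Measure.restrict_apply measurableSet_Ioo]
      have hsub : Set.Ioo 0 (g x) ∩ Set.Ioc 0 1 = Set.Ioo 0 (g x) := by
        apply Set.inter_eq_left.mpr
        exact subset_trans Set.Ioo_subset_Ioc_self (Set.Ioc_subset_Ioc_right (hξ1 x z))
      rw [hsub, Real.volume_Ioo, sub_zero]
    have int2 : ∫⁻ t in Set.Ioc (0:ℝ) 1,
        (∑ x ∈ Fz z, (Set.Ico (g x) (hh x)).indicator (fun _ => ENNReal.ofReal (μ x)) t)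
        ≤ ∑ x ∈ Fz z, ENNReal.ofReal (μ x) * ENNReal.ofReal (r x z) := by
      rw [lintegral_finset_sum _ (fun x _ => hmeas2 x)]
      apply Finset.sum_le_sum
      intro x _
      rw [lintegral_indicator measurableSet_Ico, setLIntegral_const,
        Measure.restrict_apply measurableSet_Ico]
      apply mul_le_mul_right
      calc volume (Set.Ico (g x) (hh x) ∩ Set.Ioc 0 1)
          ≤ volume (Set.Ico (g x) (hh x)) := measure_mono Set.inter_subset_left
        _ = ENNReal.ofReal (hh x - g x) := Real.volume_Ico
        _ ≤ ENNReal.ofReal (r x z) := ofReal_le_ofReal (hhr x)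
    have step : ENNReal.ofReal ε * ∑ x ∈ Fz z, ENNReal.ofReal (μ x) * ENNReal.ofReal (g x)
        ≤ ∑ x ∈ Fz z, ENNReal.ofReal (μ x) * ENNReal.ofReal (r x z) := by
      calc ENNReal.ofReal ε * ∑ x ∈ Fz z, ENNReal.ofReal (μ x) * ENNReal.ofReal (g x)
          = ∫⁻ t in Set.Ioc (0:ℝ) 1, ENNReal.ofReal ε *
            (∑ x ∈ Fz z, (Set.Ioo 0 (g x)).indicator (fun _ => ENNReal.ofReal (μ x)) t) := by
            rw [lintegral_const_mul _ (Finset.measurable_sum _ (fun x _ => hmeas1 x)), int1]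
        _ ≤ ∫⁻ t in Set.Ioc (0:ℝ) 1,
            (∑ x ∈ Fz z, (Set.Ico (g x) (hh x)).indicator (fun _ => ENNReal.ofReal (μ x)) t) :=
            setLIntegral_mono (Finset.measurable_sum _ (fun x _ => hmeas2 x)) hst
        _ ≤ _ := int2
    -- convert to tsums
    have hts : ∑' x, ENNReal.ofReal (μ x) * ENNReal.ofReal (ξ x z) = ∑ x ∈ Fz z, ENNReal.ofReal (μ x) * ENNReal.ofReal (g x) := by
      apply tsum_eq_sum
      intro b hb
      rw [show ξ b z = g b from rfl, hsupp' b hb, ofReal_zero, mul_zero]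
    rw [hts]
    exact le_trans step (ENNReal.sum_le_tsum _)
  -- sum up over z
  have hL : ∑' (z : X), ∑' (x : X), ENNReal.ofReal (μ x) * ENNReal.ofReal (ξ x z) = 1 := by
    rw [ENNReal.tsum_comm]
    have : ∀ x : X, ∑' (z : X), ENNReal.ofReal (μ x) * ENNReal.ofReal (ξ x z) = ENNReal.ofReal (μ x) := by
      intro x
      rw [ENNReal.tsum_mul_left, ← ofReal_tsum_of_nonneg (hprob x).1 (hprob x).2.1,
          (hprob x).2.2, ofReal_one, mul_one]
    rw [tsum_congr this, ← ofReal_tsum_of_nonneg hμ0 hμsum, hμ1, ofReal_one]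
  have hRt : ∑' (z : X), ∑' (x : X), ENNReal.ofReal (μ x) * ENNReal.ofReal (r x z) ≤ ENNReal.ofReal (ε / 2) := by
    rw [ENNReal.tsum_comm]
    have hinner : ∀ x : X, ∑' (z : X), ENNReal.ofReal (μ x) * ENNReal.ofReal (r x z)
        ≤ ENNReal.ofReal (μ x) * (N * ENNReal.ofReal ε') := by
      intro x
      rw [ENNReal.tsum_mul_left]
      apply mul_le_mul_right
      have hofr : ∀ z : X, ENNReal.ofReal (r x z) = ∑ e ∈ Bx x, ENNReal.ofReal (|ξ e z - ξ x z|) := by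
        intro z
        exact ofReal_sum_of_nonneg (fun e _ => abs_nonneg _)
      calc ∑' (z : X), ENNReal.ofReal (r x z) = ∑' (z : X), ∑ e ∈ Bx x, ENNReal.ofReal (|ξ e z - ξ x z|) :=
            tsum_congr hofr
        _ = ∑ e ∈ Bx x, ∑' (z : X), ENNReal.ofReal (|ξ e z - ξ x z|) :=
            Summable.tsum_finsetSum (fun e _ => ENNReal.summable)
        _ ≤ ∑ e ∈ Bx x, ENNReal.ofReal ε' := by
            apply Finset.sum_le_sum
            intro e he
            have hsume : Summable (fun w => |ξ e w - ξ x w|) :=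
              ((hprob e).2.1.sub (hprob x).2.1).abs
            rw [← ofReal_tsum_of_nonneg (fun w => abs_nonneg _) hsume]
            apply ofReal_le_ofReal
            have hde : dist e x ≤ R := by
              rw [dist_comm]; exact (hBx_mem x e).1 he
            exact le_of_lt (hvar e x hde)
        _ ≤ N * ENNReal.ofReal ε' := by
            rw [Finset.sum_const, nsmul_eq_mul]
            exact mul_le_mul_left (Nat.cast_le.mpr (hBx_card x)) _
    calc ∑' (x : X), ∑' (z : X), ENNReal.ofReal (μ x) * ENNReal.ofReal (r x z)
        ≤ ∑' (x : X), ENNReal.ofReal (μ x) * (N * ENNReal.ofReal ε') := Summable.tsum_le_tsum hinner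
          ENNReal.summable ENNReal.summable
      _ = (∑' (x : X), ENNReal.ofReal (μ x)) * (N * ENNReal.ofReal ε') := ENNReal.tsum_mul_right
      _ = N * ENNReal.ofReal ε' := by
          rw [← ofReal_tsum_of_nonneg hμ0 hμsum, hμ1, ofReal_one, one_mul]
      _ ≤ ENNReal.ofReal (ε / 2) := by
          have hεe : ε' * (2 * ((N : ℝ) + 1)) = ε := div_mul_cancel₀ _ hNpos.ne'
          have hc : (N : ℝ) * ε' ≤ ε / 2 := by nlinarith [hε'.le]
          calc (N : ℝ≥0∞) * ENNReal.ofReal ε' = ENNReal.ofReal ((N : ℝ) * ε') := by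
                rw [← ENNReal.ofReal_natCast N, ← ENNReal.ofReal_mul (Nat.cast_nonneg N)]
            _ ≤ ENNReal.ofReal (ε / 2) := ENNReal.ofReal_le_ofReal hc
  have hfinal : ENNReal.ofReal ε ≤ ENNReal.ofReal (ε / 2) := by
    calc ENNReal.ofReal ε = ENNReal.ofReal ε * 1 := (mul_one _).symm
      _ = ENNReal.ofReal ε * ∑' (z : X), ∑' (x : X), ENNReal.ofReal (μ x) * ENNReal.ofReal (ξ x z) := by rw [hL]
      _ = ∑' (z : X), ENNReal.ofReal ε * ∑' (x : X), ENNReal.ofReal (μ x) * ENNReal.ofReal (ξ x z) :=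
          ENNReal.tsum_mul_left.symm
      _ ≤ ∑' (z : X), ∑' (x : X), ENNReal.ofReal (μ x) * ENNReal.ofReal (r x z) :=
          Summable.tsum_le_tsum key ENNReal.summable ENNReal.summable
      _ ≤ ENNReal.ofReal (ε / 2) := hRt
  rw [ofReal_le_ofReal_iff (by positivity)] at hfinal
  linarith
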